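/- arXiv:1802.09211 — 2 statements merged into one kernel-verified Lean document; each statement's English description precedes it below -/
import Mathlib

section
/- If s : ℝ → ℝ is differentiable and satisfies s'(t) = -(c / s(t)) * (s(t) - a)^2 for all t, with s(t) ≠ a and s(t) ≠ 0 for all t, then the quantity F(t) := log |s(t) - a| - a / (s(t) - a) + c * t is constant in t (here a, c are real constants). -/
open Real

theorem stmt0 (a c : ℝ) (s : ℝ → ℝ)
    (hs : ∀ t, HasDerivAt s (-(c / s t) * (s t - a) ^ 2) t)
    (hne : ∀ t, s t ≠ a) (hne0 : ∀ t, s t ≠ 0) :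
    ∀ t₁ t₂ : ℝ,
      (Real.log |s t₁ - a| - a / (s t₁ - a) + c * t₁) =
      (Real.log |s t₂ - a| - a / (s t₂ - a) + c * t₂) := by
  have key : ∀ t, HasDerivAt
      (fun t => Real.log (s t - a) - a / (s t - a) + c * t) 0 t := by
    intro t
    have h1 : s t - a ≠ 0 := sub_ne_zero.2 (hne t)
    have hu : HasDerivAt (fun t => s t - a) (-(c / s t) * (s t - a) ^ 2) t :=
      (hs t).sub_const a
    have hlog := hu.log h1
    have hinv := hu.inv h1
    have hdiv : HasDerivAt (fun t => a / (s t - a))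
        (a * (-(-(c / s t) * (s t - a) ^ 2) / (s t - a) ^ 2)) t := by
      simpa [div_eq_mul_inv] using hinv.const_mul a
    have hfin := (hlog.sub hdiv).add ((hasDerivAt_id t).const_mul c)
    refine hfin.congr_deriv ?_
    have h0 := hne0 t
    field_simp
    ring
  have hdiff : Differentiable ℝ
      (fun t => Real.log (s t - a) - a / (s t - a) + c * t) :=
    fun t => (key t).differentiableAt
  have hderiv : ∀ t, deriv (fun t => Real.log (s t - a) - a / (s t - a) + c * t) t = 0 :=
    fun t => (key t).deriv
  intro t₁ t₂
  have := is_const_of_deriv_eq_zero hdiff hderiv t₁ t₂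
  simpa [Real.log_abs] using this
end

section
/- Let a > 0, c > 0, and let s : [0, ∞) → ℝ be continuous with s(t) > a for all t and satisfying the implicit equation log(s(t) - a) - a/(s(t) - a) = -c·t + C for a constant C. Then s(t) → a as t → +∞. -/
open Filter

theorem stmt10 (a c C : ℝ) (ha : 0 < a) (hc : 0 < c) (s : ℝ → ℝ)
    (hcont : ContinuousOn s (Set.Ici 0))
    (hgt : ∀ t ∈ Set.Ici (0 : ℝ), a < s t)
    (himp : ∀ t ∈ Set.Ici (0 : ℝ),
      Real.log (s t - a) - a / (s t - a) = -c * t + C) :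
    Tendsto s atTop (nhds a) := by
  rw [Metric.tendsto_atTop]
  intro ε hε
  set L := Real.log ε - a / ε with hL
  refine ⟨max 0 ((C - L) / c + 1), fun t ht => ?_⟩
  have ht0 : (0 : ℝ) ≤ t := le_trans (le_max_left _ _) ht
  have ht1 : (C - L) / c + 1 ≤ t := le_trans (le_max_right _ _) ht
  have hts : a < s t := hgt t ht0
  have hx : 0 < s t - a := sub_pos.mpr hts
  have heq := himp t ht0
  have hlt : -c * t + C < L := by
    have h1 : (C - L) / c < t := by nlinarith
    have h2 : C - L < t * c := (div_lt_iff₀ hc).mp h1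
    nlinarith
  have hkey : Real.log (s t - a) - a / (s t - a) < L := heq ▸ hlt
  have hsε : s t - a < ε := by
    by_contra h
    push_neg at h
    have h1 : Real.log ε ≤ Real.log (s t - a) := Real.log_le_log hε h
    have h2 : a / (s t - a) ≤ a / ε := by gcongr
    rw [hL] at hkey
    nlinarith
  rw [Real.dist_eq, abs_of_pos hx]
  exact hsε
end
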